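/- Let K be a field of characteristic 0 and f(z) ∈ K[[z]]. Suppose there exists g(z) ∈ K[[z]] with f(g(z)) = g(f(z)) = z (compositional inverses, so f(0) = g(0) = 0). Put g̃(z) = g(z) + 1 and assume that the tuple (1, g̃(z), g̃²(z), …, g̃^l(z)) is perfect for every l ∈ ℕ. Then for every m ∈ ℤ_{≥2}, every nonincreasing index n = (n₀, n₁, …, n_{m−1}) ∈ ℤ_{≥0}^m with n₀ ≥ n₁ ≥ … ≥ n_{m−1} is normal with respect to (1, f(z), f²(z), …, f^{m−1}(z)). -/

import Mathlib

open PowerSeries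

/-- `(A₁,…,A_m)` is a weight-`nn` Padé approximant of `f = (f₁,…,f_m)`. -/
def IsPadeApprox {K : Type*} [Field K] {m : ℕ} (f : Fin m → PowerSeries K)
    (nn : Fin m → ℕ) (A : Fin m → Polynomial K) : Prop :=
  A ≠ 0 ∧ (∀ j, (A j).degree ≤ (nn j : ℕ)) ∧
    (((∑ j, (nn j + 1)) - 1 : ℕ) : ℕ∞) ≤ (∑ j, (A j : PowerSeries K) * f j).order

/-- The index `nn` is normal with respect to `f`. -/
def IsNormal {K : Type*} [Field K] {m : ℕ} (f : Fin m → PowerSeries K)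
    (nn : Fin m → ℕ) : Prop :=
  ∀ A : Fin m → Polynomial K, IsPadeApprox f nn A →
    (∑ j, (A j : PowerSeries K) * f j).order = (((∑ j, (nn j + 1)) - 1 : ℕ) : ℕ∞)

/-- `f` is perfect: every index is normal with respect to `f`. -/
def IsPerfect {K : Type*} [Field K] {m : ℕ} (f : Fin m → PowerSeries K) : Prop :=
  ∀ nn : Fin m → ℕ, IsNormal f nn

/-- Composition `f(g(z))` of formal power series, meaningful when `g(0) = 0`
(then the coefficient of `z^n` in `Σ_i f_i g^i` only involves `i ≤ n`). -/
noncomputable def PScomp {K : Type*} [CommRing K] (f g : PowerSeries K) : PowerSeries K :=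
  PowerSeries.mk fun n =>
    ∑ i ∈ Finset.range (n + 1), (PowerSeries.coeff i f) * (PowerSeries.coeff n (g ^ i))


section PScompLemmas

variable {K : Type*} [CommRing K] {g : PowerSeries K}

private lemma coeff_pow_eq_zero (hg : constantCoeff g = 0) {i n : ℕ} (h : n < i) :
    coeff n (g ^ i) = 0 := by
  have : (X : PowerSeries K) ^ i ∣ g ^ i := pow_dvd_pow_of_dvd (X_dvd_iff.mpr hg) i
  exact (X_pow_dvd_iff.mp this) n h

private lemma coeff_PScomp (f : PowerSeries K) (n : ℕ) :
    coeff n (PScomp f g) =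
      ∑ i ∈ Finset.range (n + 1), (coeff i f) * (coeff n (g ^ i)) := by
  simp [PScomp]

private lemma coeff_PScomp_eq_aeval (hg : constantCoeff g = 0) (f : PowerSeries K) {n N : ℕ}
    (h : n < N) :
    coeff n (PScomp f g) = coeff n (Polynomial.aeval g (trunc N f)) := by
  obtain ⟨N', rfl⟩ : ∃ N', N = N' + 1 := ⟨N - 1, by omega⟩
  rw [Polynomial.aeval_eq_sum_range' (natDegree_trunc_lt f N'), map_sum]
  rw [coeff_PScomp]
  rw [Finset.sum_subset (Finset.range_subset_range.mpr h)]
  · apply Finset.sum_congr rfl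
    intro i hi
    rw [Finset.mem_range] at hi
    rw [coeff_smul, coeff_trunc, if_pos hi, smul_eq_mul]
  · intro i hi' hi
    rw [Finset.mem_range, not_lt] at hi
    rw [coeff_pow_eq_zero hg (by omega : n < i), mul_zero]

private lemma PScomp_coe (hg : constantCoeff g = 0) (A : Polynomial K) :
    PScomp (A : PowerSeries K) g = Polynomial.aeval g A := by
  ext n
  rw [coeff_PScomp_eq_aeval hg _ (Nat.lt_succ_of_le (Nat.le_max_left n A.natDegree)),
    trunc_coe_eq_self (Nat.lt_succ_of_le (Nat.le_max_right n A.natDegree))]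

private lemma PScomp_sum {ι : Type*} (s : Finset ι) (F : ι → PowerSeries K) :
    PScomp (∑ i ∈ s, F i) g = ∑ i ∈ s, PScomp (F i) g := by
  ext n
  simp only [coeff_PScomp, map_sum, Finset.sum_mul]
  rw [Finset.sum_comm]

private lemma coeff_pow_mul_eq_zero (hg : constantCoeff g = 0) {N n : ℕ} (h : n < N)
    (q : PowerSeries K) : coeff n (g ^ N * q) = 0 := by
  rw [coeff_mul]
  apply Finset.sum_eq_zero
  intro p hp
  rw [coeff_pow_eq_zero hg (lt_of_le_of_lt (Finset.HasAntidiagonal.antidiagonal.fst_le hp) h), zero_mul]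

private lemma PScomp_mul (hg : constantCoeff g = 0) (p q : PowerSeries K) :
    PScomp (p * q) g = PScomp p g * PScomp q g := by
  ext n
  set N := n + 1 with hN
  have key : coeff n (Polynomial.aeval g (trunc N (p * q))) =
      coeff n (Polynomial.aeval g (trunc N p * trunc N q)) := by
    have hdvd : (Polynomial.X : Polynomial K) ^ N ∣
        trunc N p * trunc N q - trunc N (p * q) := by
      rw [Polynomial.X_pow_dvd_iff]
      intro d hd
      have h1 : (trunc N p * trunc N q).coeff d
          = (trunc N ((trunc N p : PowerSeries K) * (trunc N q : PowerSeries K))).coeff d := by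
        rw [coeff_trunc, if_pos hd, ← Polynomial.coe_mul, Polynomial.coeff_coe]
      rw [Polynomial.coeff_sub, h1, trunc_trunc_mul_trunc, sub_self]
    obtain ⟨E, hE⟩ := hdvd
    have : Polynomial.aeval g (trunc N p * trunc N q) =
        Polynomial.aeval g (trunc N (p * q)) + g ^ N * Polynomial.aeval g E := by
      have h2 : trunc N p * trunc N q = trunc N (p * q) + Polynomial.X ^ N * E :=
        sub_eq_iff_eq_add'.mp hE
      rw [h2, map_add, map_mul (Polynomial.aeval g), map_pow (Polynomial.aeval g), Polynomial.aeval_X]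
    rw [this, map_add, coeff_pow_mul_eq_zero hg (by omega), add_zero]
  rw [coeff_PScomp_eq_aeval hg _ (by omega : n < N), key, map_mul, coeff_mul, coeff_mul]
  apply Finset.sum_congr rfl
  intro x hx
  rw [← coeff_PScomp_eq_aeval hg p (lt_of_le_of_lt (Finset.HasAntidiagonal.antidiagonal.fst_le hx) (by omega)),
    ← coeff_PScomp_eq_aeval hg q (lt_of_le_of_lt (Finset.HasAntidiagonal.antidiagonal.snd_le hx) (by omega))]

private lemma PScomp_one (hg : constantCoeff g = 0) : PScomp (1 : PowerSeries K) g = 1 := by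
  have := PScomp_coe hg 1
  simpa using this

private lemma PScomp_pow (hg : constantCoeff g = 0) (p : PowerSeries K) (j : ℕ) :
    PScomp (p ^ j) g = (PScomp p g) ^ j := by
  induction j with
  | zero => simpa using PScomp_one hg
  | succ j ih => rw [pow_succ, pow_succ, PScomp_mul hg, ih]

private lemma order_PScomp (hg : constantCoeff g = 0) (hg1 : coeff 1 g ≠ 0)
    [NoZeroDivisors K] (h : PowerSeries K) : (PScomp h g).order = h.order := by
  by_cases h0 : h = 0
  · subst h0
    have : PScomp (0 : PowerSeries K) g = 0 := by
      ext n; simp [coeff_PScomp]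
    rw [this]
  · obtain ⟨d, hd⟩ := WithTop.ne_top_iff_exists.mp (order_eq_top.not.mpr h0)
    rw [← hd]
    have hdh := PowerSeries.order_eq_nat.mp hd.symm
    apply PowerSeries.order_eq_nat.mpr
    obtain ⟨w, hw⟩ := X_dvd_iff.mpr hg
    have hw0 : constantCoeff w = coeff 1 g := by
      rw [hw]
      simp [coeff_succ_X_mul 0 w]
    constructor
    · rw [coeff_PScomp, Finset.sum_eq_single d]
      · have : coeff d (g ^ d) = (coeff 1 g) ^ d := by
          rw [← hw0, hw, mul_pow]
          have := coeff_X_pow_mul (w ^ d) d 0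
          simpa using this
        rw [this]
        exact mul_ne_zero hdh.1 (pow_ne_zero d hg1)
      · intro i hi hne
        rw [Finset.mem_range] at hi
        rw [hdh.2 i (by omega), zero_mul]
      · intro hd'
        simp at hd'
    · intro n hn
      rw [coeff_PScomp]
      apply Finset.sum_eq_zero
      intro i hi
      rw [Finset.mem_range] at hi
      rw [hdh.2 i (by omega), zero_mul]

private lemma coe_monomial' (n : ℕ) (a : K) :
    ((Polynomial.monomial n a : Polynomial K) : PowerSeries K)
      = PowerSeries.C a * PowerSeries.X ^ n := by
  rw [Polynomial.coe_monomial, X_pow_eq]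
  ext p
  simp [PowerSeries.coeff_monomial, coeff_C_mul]

private lemma coe_sum' {ι : Type*} (s : Finset ι) (F : ι → Polynomial K) :
    ((∑ i ∈ s, F i : Polynomial K) : PowerSeries K)
      = ∑ i ∈ s, ((F i : Polynomial K) : PowerSeries K) := by
  rw [← Polynomial.coeToPowerSeries.ringHom_apply, map_sum]
  simp [Polynomial.coeToPowerSeries.ringHom_apply]

end PScompLemmas

/-- if `f` and `g` are compositional inverses and `(1, g̃, …, g̃^l)` is perfect
for every `l`, where `g̃ = g + 1`, then every nonincreasing index is normal with respect to
`(1, f, …, f^{m−1})` for every `m ≥ 2`. -/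
theorem normal_of_inverse_perfect (K : Type*) [Field K] [CharZero K]
    (f g : PowerSeries K)
    (hfg : PScomp f g = PowerSeries.X) (hgf : PScomp g f = PowerSeries.X)
    (hperf : ∀ l : ℕ, IsPerfect (fun i : Fin (l + 1) => (g + 1) ^ (i : ℕ))) :
    ∀ m : ℕ, 2 ≤ m → ∀ nn : Fin m → ℕ, (∀ i j : Fin m, i ≤ j → nn j ≤ nn i) →
      IsNormal (fun i : Fin m => f ^ (i : ℕ)) nn := by
  intro m hm nn hmono A hA
  obtain ⟨hA0, hAdeg, hAord⟩ := hA
  simp only at hAord ⊢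
  -- basic facts from inverse relations
  have hg0 : constantCoeff g = 0 := by
    have := congrArg (coeff 0) hgf
    simpa [coeff_PScomp, coeff_zero_eq_constantCoeff] using this
  have hg1 : coeff 1 g ≠ 0 := by
    have h1 : coeff 1 (PScomp f g) = 1 := by rw [hfg, coeff_one_X]
    rw [coeff_PScomp] at h1
    intro hz
    rw [Finset.sum_range_succ, Finset.sum_range_succ, Finset.sum_range_zero, pow_one, hz,
      mul_zero, add_zero, zero_add, pow_zero] at h1
    simp at h1
  -- setup
  set i0 : Fin m := ⟨0, by omega⟩ with hi0
  set L := nn i0 with hL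
  have hnnL : ∀ j, nn j ≤ L := fun j => hmono i0 j (by rw [Fin.le_def]; exact Nat.zero_le _)
  set At : Fin m → Polynomial K := fun j => (A j).comp (Polynomial.X - Polynomial.C 1) with hAt
  have hAt_deg : ∀ j, (At j).natDegree ≤ nn j := by
    intro j
    rw [hAt]
    simp only
    rw [Polynomial.natDegree_comp, Polynomial.natDegree_X_sub_C, mul_one]
    exact Polynomial.natDegree_le_iff_degree_le.mpr (hAdeg j)
  have hA_eq : ∀ j, (At j).comp (Polynomial.X + Polynomial.C 1) = A j := by
    intro j
    rw [hAt]
    simp only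
    rw [Polynomial.comp_assoc]
    simp [Polynomial.sub_comp]
  have haevalA : ∀ j, Polynomial.aeval g (A j) = Polynomial.aeval (g + 1) (At j) := by
    intro j
    rw [← hA_eq j, Polynomial.aeval_comp]
    congr 1
    simp
  -- the transformed series
  set B : Fin (L + 1) → Polynomial K :=
    fun k => ∑ j : Fin m, Polynomial.monomial (j : ℕ) ((At j).coeff (k : ℕ)) with hB
  have hexp : ∀ j : Fin m, Polynomial.aeval (g + 1) (At j)
      = ∑ k ∈ Finset.range (L + 1), (At j).coeff k • (g + 1) ^ k := fun j =>
    Polynomial.aeval_eq_sum_range' (lt_of_le_of_lt (le_trans (hAt_deg j) (hnnL j)) (Nat.lt_succ_self L)) _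
  have hkey : PScomp (∑ j : Fin m, ((A j : PowerSeries K) * f ^ (j : ℕ))) g
      = ∑ k : Fin (L + 1), ((B k : PowerSeries K) * (g + 1) ^ (k : ℕ)) := by
    rw [PScomp_sum]
    have step1 : ∀ j : Fin m, PScomp ((A j : PowerSeries K) * f ^ (j : ℕ)) g
        = Polynomial.aeval (g + 1) (At j) * X ^ (j : ℕ) := by
      intro j
      rw [PScomp_mul hg0, PScomp_coe hg0, PScomp_pow hg0, hfg, haevalA]
    rw [Finset.sum_congr rfl fun j _ => step1 j]
    have step2 : ∀ j : Fin m, Polynomial.aeval (g + 1) (At j) * X ^ (j : ℕ)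
        = ∑ k ∈ Finset.range (L + 1),
            ((Polynomial.monomial (j : ℕ) ((At j).coeff k) : Polynomial K) : PowerSeries K)
              * (g + 1) ^ k := by
      intro j
      rw [hexp j, Finset.sum_mul]
      apply Finset.sum_congr rfl
      intro k _
      rw [coe_monomial', smul_eq_C_mul]
      ring
    rw [Finset.sum_congr rfl fun j _ => step2 j, Finset.sum_comm]
    rw [← Fin.sum_univ_eq_sum_range (fun k =>
      ∑ j : Fin m, ((Polynomial.monomial (j : ℕ) ((At j).coeff k) : Polynomial K) : PowerSeries K)
        * (g + 1) ^ k) (L + 1)]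
    apply Finset.sum_congr rfl
    intro k _
    rw [hB]
    simp only
    rw [coe_sum', Finset.sum_mul]
  -- conjugate index
  set S : Fin (L + 1) → Finset (Fin m) :=
    fun k => Finset.univ.filter (fun j : Fin m => (k : ℕ) ≤ nn j) with hS
  have hS0 : ∀ k : Fin (L + 1), i0 ∈ S k := by
    intro k
    rw [hS]
    simp only [Finset.mem_filter, Finset.mem_univ, true_and]
    have hk := k.isLt
    omega
  set mm : Fin (L + 1) → ℕ := fun k => (S k).card - 1 with hmm
  have hcard : ∀ k, mm k + 1 = (S k).card := by
    intro k
    have : 0 < (S k).card := Finset.card_pos.mpr ⟨i0, hS0 k⟩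
    simp only [hmm]
    omega
  have hjlt : ∀ (k : Fin (L + 1)) (j : Fin m), j ∈ S k → (j : ℕ) < (S k).card := by
    intro k j hj
    have hsub : Finset.Iic j ⊆ S k := by
      intro i hi
      rw [Finset.mem_Iic] at hi
      rw [hS, Finset.mem_filter]
      refine ⟨Finset.mem_univ _, le_trans ?_ (hmono i j hi)⟩
      rw [hS, Finset.mem_filter] at hj
      exact hj.2
    have hc := Finset.card_le_card hsub
    rw [Fin.card_Iic] at hc
    omega
  have hBdeg : ∀ k, (B k).degree ≤ ((mm k : ℕ) : WithBot ℕ) := by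
    intro k
    rw [hB]
    simp only
    refine le_trans (Polynomial.degree_sum_le _ _) ?_
    apply Finset.sup_le
    intro j _
    by_cases hc : (At j).coeff (k : ℕ) = 0
    · rw [hc, Polynomial.monomial_zero_right, Polynomial.degree_zero]
      exact bot_le
    · refine le_trans (Polynomial.degree_monomial_le _ _) ?_
      have hj : j ∈ S k := by
        rw [hS, Finset.mem_filter]
        exact ⟨Finset.mem_univ _, le_trans (Polynomial.le_natDegree_of_ne_zero hc) (hAt_deg j)⟩
      have hlt := hjlt k j hj
      have : (j : ℕ) ≤ mm k := by rw [hmm]; simp only; omega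
      exact_mod_cast this
  have hweight : ∑ k : Fin (L + 1), (mm k + 1) = ∑ j : Fin m, (nn j + 1) := by
    have h1 : ∀ k : Fin (L + 1), mm k + 1 = ∑ j : Fin m, if (k : ℕ) ≤ nn j then 1 else 0 := by
      intro k
      rw [hcard k, hS, Finset.card_filter]
    rw [Finset.sum_congr rfl fun k _ => h1 k, Finset.sum_comm]
    apply Finset.sum_congr rfl
    intro j _
    rw [Fin.sum_univ_eq_sum_range (fun k => if k ≤ nn j then 1 else 0) (L + 1)]
    rw [← Finset.card_filter]
    have hfe : Finset.filter (fun k => k ≤ nn j) (Finset.range (L + 1))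
        = Finset.range (nn j + 1) := by
      ext k
      simp only [Finset.mem_filter, Finset.mem_range]
      have := hnnL j
      omega
    rw [hfe, Finset.card_range]
  have hAtzero : ∀ j, At j = 0 → A j = 0 := by
    intro j hj
    rw [← hA_eq j, hj, Polynomial.zero_comp]
  have hB0 : B ≠ 0 := by
    intro h
    apply hA0
    funext j
    apply hAtzero
    apply Polynomial.ext
    intro k
    simp only [Polynomial.coeff_zero]
    by_cases hk : k ≤ L
    · have hBk : B ⟨k, by omega⟩ = 0 := by rw [h]; rfl
      have hco := congrArg (fun p => Polynomial.coeff p (j : ℕ)) hBk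
      rw [hB] at hco
      simp only [Polynomial.coeff_zero] at hco
      rw [Polynomial.finset_sum_coeff, Finset.sum_eq_single j] at hco
      · simpa [Polynomial.coeff_monomial] using hco
      · intro j' _ hne
        rw [Polynomial.coeff_monomial, if_neg (fun hc => hne (Fin.val_injective hc))]
      · simp
    · exact Polynomial.coeff_eq_zero_of_natDegree_lt
        (lt_of_le_of_lt (le_trans (hAt_deg j) (hnnL j)) (by omega))
  have horder := order_PScomp hg0 hg1 (∑ j : Fin m, ((A j : PowerSeries K) * f ^ (j : ℕ)))
  have happrox : IsPadeApprox (fun i : Fin (L + 1) => (g + 1) ^ (i : ℕ)) mm B := by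
    refine ⟨hB0, hBdeg, ?_⟩
    simp only
    rw [← hkey, horder, hweight]
    exact hAord
  have hfin := hperf L mm B happrox
  simp only at hfin
  rw [← hkey, horder, hweight] at hfin
  exact hfin
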